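/- Suppose a family of functions η_k : [0,T] → H₀²(Γ) satisfies a uniform bound ‖∂_t η_k‖_{L²(0,T;L²(Γ))} ≤ C and ‖η_k‖_{L^∞(0,T;H₀²(Γ))} ≤ C, and η_k(0) = η₀ with η₀ + 1 ≥ c > 0 pointwise. Then, using the interpolation ‖f‖_{H^{3/2}} ≤ ‖f‖_{L²}^{1/4}‖f‖_{H²}^{3/4} and the embedding H^{3/2}(Γ) ↪ C(Γ̄), there exists T' > 0 depending only on C and c (not on k) such that 1 + η_k(t,X) ≥ c/2 > 0 for all t ∈ [0,T'], X ∈ Γ̄, and all k. -/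

import Mathlib

theorem stmt10 {Γ : Type*} (T C c Ce : ℝ) (hT : 0 < T) (hC : 0 < C) (hc : 0 < c)
    (hCe : 0 < Ce)
    (NL2 NH2 NH32 Nsup : (Γ → ℝ) → ℝ)
    (η : ℕ → ℝ → Γ → ℝ) (η₀ : Γ → ℝ)
    (hNL2 : ∀ f, 0 ≤ NL2 f) (hNH2 : ∀ f, 0 ≤ NH2 f)
    (hinterp : ∀ f, NH32 f ≤ NL2 f ^ ((1:ℝ)/4) * NH2 f ^ ((3:ℝ)/4))
    (hembed : ∀ f X, |f X| ≤ Ce * NH32 f)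
    (hsup : ∀ f, Nsup f = ⨆ X, |f X|)
    (hL2 : ∀ k, ∀ t ∈ Set.Icc (0:ℝ) T, NL2 (η k t - η k 0) ≤ C * t)
    (hH2 : ∀ k, ∀ t ∈ Set.Icc (0:ℝ) T, NH2 (η k t - η k 0) ≤ 2 * C)
    (hinit : ∀ k, η k 0 = η₀) (h0 : ∀ X, c ≤ η₀ X + 1) :
    ∃ T' > 0, ∀ k, ∀ t ∈ Set.Icc (0:ℝ) (min T T'), ∀ X, c / 2 ≤ 1 + η k t X := by
  set D : ℝ := (2 * C) ^ ((3:ℝ)/4) with hD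
  have hDpos : 0 < D := Real.rpow_pos_of_pos (by linarith) _
  set x : ℝ := c / (2 * Ce * D) with hx
  have hxpos : 0 < x := div_pos hc (by positivity)
  refine ⟨x ^ (4:ℕ) / C, by positivity, ?_⟩
  intro k t ht X
  have htT : t ∈ Set.Icc (0:ℝ) T :=
    ⟨ht.1, le_trans ht.2 (min_le_left _ _)⟩
  have h1 : NL2 (η k t - η k 0) ≤ C * t := hL2 k t htT
  have h2 : NH2 (η k t - η k 0) ≤ 2 * C := hH2 k t htT
  have hCt : C * t ≤ x ^ (4:ℕ) := by
    have := le_trans ht.2 (min_le_right _ _)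
    calc C * t ≤ C * (x ^ (4:ℕ) / C) := by
          exact mul_le_mul_of_nonneg_left this hC.le
      _ = x ^ (4:ℕ) := by field_simp
  have hr1 : NL2 (η k t - η k 0) ^ ((1:ℝ)/4) ≤ x := by
    have : NL2 (η k t - η k 0) ^ ((1:ℝ)/4) ≤ (x ^ (4:ℕ)) ^ ((1:ℝ)/4) :=
      Real.rpow_le_rpow (hNL2 _) (le_trans h1 hCt) (by norm_num)
    rwa [← Real.rpow_natCast x 4, ← Real.rpow_mul hxpos.le, (by norm_num : (4:ℕ) * ((1:ℝ)/4) = 1), Real.rpow_one] at this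
  have hr2 : NH2 (η k t - η k 0) ^ ((3:ℝ)/4) ≤ D :=
    Real.rpow_le_rpow (hNH2 _) h2 (by norm_num)
  have hdiff : |(η k t - η k 0) X| ≤ c / 2 := by
    calc |(η k t - η k 0) X| ≤ Ce * NH32 (η k t - η k 0) := hembed _ X
      _ ≤ Ce * (NL2 (η k t - η k 0) ^ ((1:ℝ)/4) * NH2 (η k t - η k 0) ^ ((3:ℝ)/4)) :=
          mul_le_mul_of_nonneg_left (hinterp _) hCe.le
      _ ≤ Ce * (x * D) := by
          refine mul_le_mul_of_nonneg_left ?_ hCe.le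
          exact mul_le_mul hr1 hr2 (Real.rpow_nonneg (hNH2 _) _) hxpos.le
      _ = c / 2 := by
          rw [hx]; field_simp
  have hη0 : η k 0 X = η₀ X := by rw [hinit k]
  have : |η k t X - η₀ X| ≤ c / 2 := by
    simpa [Pi.sub_apply, hη0] using hdiff
  have h0X := h0 X
  have := abs_le.mp this
  linarith [this.1]
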